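/- arXiv:2003.03896 — 3 statements merged into one kernel-verified Lean document; each statement's English description precedes it below -/
import Mathlib

section
/- Fix k ≥ 0, N ≥ 2, and nonnegative integers a_j, b_j, m_j, h_j for 0 < j < N with a_j + b_j + m_j + k = C(h_j,2) for all j. Let F_j be the infinite (a_j,m_j,h_j)-staircase, G_j the infinite (b_{N−j}, m_{N−j}, h_{N−j})-staircase, F = min_j F_j, and G = min_j G_j. Then for all integers n and i: F(i) ≤ n (with i in the domain of F) if and only if G(C(n,2) − k − i) ≤ n (with C(n,2) − k − i in the domain of G). -/
/-- `C2 n = n(n−1)/2`. -/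
def C2 (n : ℤ) : ℤ := n * (n - 1) / 2

/-- The infinite `(a,m,h)`-staircase, intended for arguments `i ≥ a`:
the weakly increasing function whose values are `m+1` copies of `h` followed by,
for each `p ≥ 1`, `h+p−1` copies of `h+p`.  Equivalently, `staircase a m h i` is
the least `n ≥ h` with `i ≤ a + m + C2 n − C2 h`. -/
noncomputable def staircase (a m h i : ℤ) : ℤ :=
  sInf {n : ℤ | h ≤ n ∧ i ≤ a + m + C2 n - C2 h}

lemma two_mul_C2 (n : ℤ) : 2 * C2 n = n * (n - 1) := by
  have hd : 2 ∣ n * (n - 1) := by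
    rcases Int.even_or_odd n with ⟨c, hc⟩ | ⟨c, hc⟩
    · exact ⟨c * (n - 1), by rw [hc]; ring⟩
    · exact ⟨n * c, by rw [hc]; ring⟩
  rw [C2, Int.mul_ediv_cancel' hd]

lemma C2_mono {x y : ℤ} (hx : 0 ≤ x) (hxy : x ≤ y) : C2 x ≤ C2 y := by
  have h1 := two_mul_C2 x
  have h2 := two_mul_C2 y
  rcases eq_or_lt_of_le hxy with rfl | hlt
  · exact le_rfl
  · nlinarith [mul_nonneg (by linarith : (0:ℤ) ≤ y - x) (by linarith : (0:ℤ) ≤ x + y - 1)]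

lemma staircase_le_iff (a m h i n : ℤ) (hh : 0 ≤ h) :
    staircase a m h i ≤ n ↔ (h ≤ n ∧ i ≤ a + m + C2 n - C2 h) := by
  set S : Set ℤ := {n : ℤ | h ≤ n ∧ i ≤ a + m + C2 n - C2 h} with hS
  have hbdd : BddBelow S := ⟨h, fun x hx => hx.1⟩
  have hne : S.Nonempty := by
    refine ⟨max h (max 2 (i - a - m + C2 h + 1)), le_max_left _ _, ?_⟩
    set t := max h (max 2 (i - a - m + C2 h + 1)) with ht
    have h2 : 2 ≤ t := le_trans (le_max_left _ _) (le_max_right _ _)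
    have h3 : i - a - m + C2 h + 1 ≤ t :=
      le_trans (le_max_right _ _) (le_max_right _ _)
    have := two_mul_C2 t
    nlinarith
  constructor
  · intro hle
    have hmem : sInf S ∈ S := Int.csInf_mem hne hbdd
    refine ⟨le_trans hmem.1 hle, ?_⟩
    have := C2_mono (le_trans hh hmem.1) hle
    have h2 := hmem.2
    linarith
  · intro hn
    exact csInf_le hbdd hn

theorem stmt11 (k N : ℕ) (hN : 2 ≤ N) (a b m h : ℕ → ℕ)
    (hyp : ∀ j, 0 < j → j < N → (a j : ℤ) + b j + m j + k = C2 (h j)) (n i : ℤ) :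
    -- F(i) ≤ n, with i in the domain of F = min of the Fⱼ
    (∃ j, 0 < j ∧ j < N ∧ (a j : ℤ) ≤ i ∧
        staircase (a j) (m j) (h j) i ≤ n) ↔
    -- G(C(n,2) − k − i) ≤ n, with C(n,2) − k − i in the domain of G = min of the Gⱼ,
    -- where Gⱼ is the (b_{N−j}, m_{N−j}, h_{N−j})-staircase
    (∃ j, 0 < j ∧ j < N ∧ (b (N - j) : ℤ) ≤ C2 n - k - i ∧
        staircase (b (N - j)) (m (N - j)) (h (N - j)) (C2 n - k - i) ≤ n) := by
  constructor
  · rintro ⟨j, hj0, hjN, hai, hs⟩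
    rw [staircase_le_iff _ _ _ _ _ (by positivity)] at hs
    obtain ⟨hhn, hi⟩ := hs
    have heq := hyp j hj0 hjN
    refine ⟨N - j, by omega, by omega, ?_⟩
    rw [Nat.sub_sub_self hjN.le]
    rw [staircase_le_iff _ _ _ _ _ (by positivity)]
    refine ⟨by linarith, hhn, by linarith⟩
  · rintro ⟨j, hj0, hjN, hbi, hs⟩
    rw [staircase_le_iff _ _ _ _ _ (by positivity)] at hs
    obtain ⟨hhn, hi⟩ := hs
    have heq := hyp (N - j) (by omega) (by omega)
    refine ⟨N - j, by omega, by omega, by linarith, ?_⟩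
    rw [staircase_le_iff _ _ _ _ _ (by positivity)]
    refine ⟨hhn, by linarith⟩
end

section
/- Let F be the infinite (a,m,h)-staircase and G the infinite (a',m',h')-staircase. If a + m < a' and G(a') < F(a'), then G(i) ≤ F(i) for all i ≥ a'. -/
lemma C2_mono_s12 {p q : ℤ} (hp : 0 ≤ p) (hpq : p ≤ q) : C2 p ≤ C2 q := by
  nlinarith [two_mul_C2 p, two_mul_C2 q, mul_nonneg (sub_nonneg.2 hpq) hp,
    mul_nonneg (sub_nonneg.2 hpq) (sub_nonneg.2 hpq)]

lemma C2_ge {n : ℤ} (hn : 0 ≤ n) : n - 1 ≤ C2 n := by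
  rcases le_or_gt n 1 with h1 | h1
  · interval_cases n <;> simp [C2]
  · nlinarith [two_mul_C2 n, mul_nonneg (by omega : (0:ℤ) ≤ n - 1) (by omega : (0:ℤ) ≤ n - 2)]

lemma staircase_bdd (a m h i : ℤ) :
    BddBelow {n : ℤ | h ≤ n ∧ i ≤ a + m + C2 n - C2 h} :=
  ⟨h, fun _ hn => hn.1⟩

lemma staircase_nonempty (a m h i : ℤ) (hh : 0 ≤ h) :
    {n : ℤ | h ≤ n ∧ i ≤ a + m + C2 n - C2 h}.Nonempty := by
  refine ⟨max h (i - a - m + C2 h + 1), le_max_left _ _, ?_⟩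
  have h0 : (0:ℤ) ≤ max h (i - a - m + C2 h + 1) := le_trans hh (le_max_left _ _)
  have := C2_ge h0
  have := le_max_right h (i - a - m + C2 h + 1)
  linarith

lemma staircase_mem (a m h i : ℤ) (hh : 0 ≤ h) :
    h ≤ staircase a m h i ∧ i ≤ a + m + C2 (staircase a m h i) - C2 h :=
  Int.csInf_mem (staircase_nonempty a m h i hh) (staircase_bdd a m h i)

lemma staircase_le {a m h i n : ℤ} (hn : h ≤ n) (hi : i ≤ a + m + C2 n - C2 h) :
    staircase a m h i ≤ n :=
  csInf_le (staircase_bdd a m h i) ⟨hn, hi⟩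

lemma staircase_mono (a m h : ℤ) (hh : 0 ≤ h) {i j : ℤ} (hij : i ≤ j) :
    staircase a m h i ≤ staircase a m h j :=
  csInf_le_csInf (staircase_bdd a m h i) (staircase_nonempty a m h j hh)
    (fun n hn => ⟨hn.1, hij.trans hn.2⟩)

theorem stmt12 (a m h a' m' h' : ℤ) (hm : 0 ≤ m) (hh : 0 ≤ h) (hm' : 0 ≤ m') (hh' : 0 ≤ h')
    (h1 : a + m < a') (h2 : staircase a' m' h' a' < staircase a m h a') :
    ∀ i, a' ≤ i → staircase a' m' h' i ≤ staircase a m h i := by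
  intro i hi
  obtain ⟨hFi_h, hFi_th⟩ := staircase_mem a m h i hh
  obtain ⟨hFa_h, hFa_th⟩ := staircase_mem a m h a' hh
  obtain ⟨hGa_h, hGa_th⟩ := staircase_mem a' m' h' a' hh'
  have hFmono : staircase a m h a' ≤ staircase a m h i := staircase_mono a m h hh hi
  have hFa_gt : h < staircase a m h a' := by
    rcases lt_or_eq_of_le hFa_h with h' | h'
    · exact h'
    · rw [← h'] at hFa_th; linarith
  have hkey : a + m + C2 (staircase a m h a' - 1) - C2 h < a' := by
    by_contra hc
    push_neg at hc
    have := staircase_le (a := a) (m := m) (h := h) (i := a') (n := staircase a m h a' - 1)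
      (by omega) hc
    omega
  have hC1 : C2 (staircase a' m' h' a') ≤ C2 (staircase a m h a' - 1) :=
    C2_mono_s12 (hh'.trans hGa_h) (by omega)
  exact staircase_le (by linarith) (by linarith)
end

section
/- Let γ be a partition with dinv(γ) = a, mind(γ) = n, and let m ≥ 0 be the least integer such that the (m+1)-th column of γ has exactly n − m − 1 cells. Let I be the set of i ≥ 0 such that ν^i(γ) is defined. Then the function F on {a + i : i ∈ I} given by F(a+i) = mind(ν^i(γ)) is an (a,m,n)-staircase (a restriction of the infinite (a,m,n)-staircase to an initial segment of its domain, possibly all of it). -/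
/-- The `i`-th part (0-indexed) of a partition given as a list, with 0 padding. -/
def parts (γ : List ℕ) (i : ℕ) : ℕ := γ.getD i 0

/-- The number of cells in the (0-indexed) `j`-th column of the diagram. -/
def conj (γ : List ℕ) (j : ℕ) : ℕ :=
  (List.range γ.length).countP (fun i => decide (j < parts γ i))

/-- The cells of the diagram of `γ`, 0-indexed. -/
def cells (γ : List ℕ) : Finset (ℕ × ℕ) :=
  (Finset.range γ.length ×ˢ Finset.range (γ.sum + 1)).filter (fun c => c.2 < parts γ c.1)

/-- The diagonal inversion count: cells with arm − leg ∈ {0,1}. -/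
def dinv (γ : List ℕ) : ℕ :=
  ((cells γ).filter (fun c =>
    (parts γ c.1 : ℤ) - 1 - c.2 = (conj γ c.2 : ℤ) - 1 - c.1 ∨
    (parts γ c.1 : ℤ) - 1 - c.2 = (conj γ c.2 : ℤ) - 1 - c.1 + 1)).card

/-- Minimum triangle size: least `n` with `γᵢ ≤ n − i` for all `i`. -/
noncomputable def mind (γ : List ℕ) : ℕ := sInf {n : ℕ | ∀ i < γ.length, parts γ i + i + 1 ≤ n}

/-- A list of naturals represents a partition if weakly decreasing with positive parts. -/
def IsPartition (γ : List ℕ) : Prop := List.Pairwise (· ≥ ·) γ ∧ ∀ x ∈ γ, 0 < x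

/-- The successor map `ν`: prepend a part `ℓ(γ)+1`, decrement all old parts,
and delete the resulting zero parts. Meaningful when `γ₁ ≤ ℓ(γ) + 2`. -/
def nu (γ : List ℕ) : List ℕ :=
  ((γ.length + 1) :: γ.map (fun x => x - 1)).filter (fun x => x ≠ 0)

/-- `nuIter i γ = some δ` iff the `i`-th iterate `ν^i(γ)` is defined and equals `δ`. -/
def nuIter : ℕ → List ℕ → Option (List ℕ)
  | 0, γ => some γ
  | i + 1, γ => if γ.headD 0 ≤ γ.length + 2 then nuIter i (nu γ) else none

lemma getD_le_sum (l : List ℕ) : ∀ i, l.getD i 0 ≤ l.sum := by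
  induction l with
  | nil => intro i; simp
  | cons a t ih =>
    intro i
    cases i with
    | zero => simp
    | succ n => simpa using le_trans (ih n) (Nat.le_add_left _ _)

lemma parts_cons_succ (a : ℕ) (t : List ℕ) (i : ℕ) : parts (a :: t) (i+1) = parts t i := rfl

lemma conj_countP (l : List ℕ) (j : ℕ) : conj l j = l.countP (fun x => decide (j < x)) := by
  induction l with
  | nil => simp [conj]
  | cons a t ih =>
    have h1 : (fun i => decide (j < parts (a :: t) (i+1))) = (fun i => decide (j < parts t i)) := by
      funext i; rw [parts_cons_succ]
    rw [conj, List.length_cons, List.range_succ_eq_map, List.countP_cons, List.countP_map,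
      List.countP_cons]
    have h2 : ((fun i => decide (j < parts (a :: t) i)) ∘ Nat.succ) = (fun i => decide (j < parts t i)) := by
      funext i; simp only [Function.comp_apply]; exact congrFun h1 i
    rw [h2, ← conj, ih]
    have : parts (a :: t) 0 = a := rfl
    rw [this]

lemma conj_le_length (l : List ℕ) (j : ℕ) : conj l j ≤ l.length := by
  rw [conj_countP]; exact List.countP_le_length

lemma conj_zero (l : List ℕ) (hp : IsPartition l) : conj l 0 = l.length := by
  rw [conj_countP]
  exact List.countP_eq_length.2 (fun a ha => by simpa using hp.2 a ha)

lemma mem_le_head {l : List ℕ} (hs : List.Pairwise (· ≥ ·) l) {x : ℕ} (hx : x ∈ l) :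
    x ≤ l.headD 0 := by
  cases l with
  | nil => simp at hx
  | cons a t =>
    rcases List.mem_cons.1 hx with rfl | hxt
    · simp
    · exact (List.pairwise_cons.1 hs).1 x hxt

lemma conj_eq_zero {l : List ℕ} (hs : List.Pairwise (· ≥ ·) l) {j : ℕ} (hj : l.headD 0 ≤ j) :
    conj l j = 0 := by
  rw [conj_countP]
  exact List.countP_eq_zero.2 (fun a ha => by simpa using le_trans (mem_le_head hs ha) hj)

lemma conj_pos_lt_head {l : List ℕ} (hs : List.Pairwise (· ≥ ·) l) {j : ℕ}
    (h : 0 < conj l j) : j < l.headD 0 := by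
  by_contra hc
  rw [conj_eq_zero hs (by omega)] at h
  omega

lemma parts_mem {l : List ℕ} {i : ℕ} (h : i < l.length) : parts l i ∈ l := by
  rw [parts, List.getD_eq_getElem l 0 h]
  exact List.getElem_mem h

lemma lt_conj_iff {l : List ℕ} (hs : List.Pairwise (· ≥ ·) l) (i j : ℕ) :
    i < conj l j ↔ i < l.length ∧ j < parts l i := by
  rw [conj_countP]
  induction l generalizing i with
  | nil => simp
  | cons a t ih =>
    have hst := List.pairwise_cons.1 hs
    rw [List.countP_cons]
    by_cases hja : j < a
    · rw [if_pos (by simpa using hja)]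
      cases i with
      | zero => simp [parts, hja]
      | succ n =>
        have := ih hst.2 n
        simp only [List.length_cons, parts_cons_succ]
        omega
    · have h0 : List.countP (fun x => decide (j < x)) t = 0 :=
        List.countP_eq_zero.2 (fun b hb => by
          have : b ≤ a := hst.1 b hb
          simp; omega)
      rw [h0, if_neg (by simpa using hja)]
      constructor
      · omega
      · rintro ⟨hlen, hpart⟩
        exfalso
        cases i with
        | zero => exact hja (by simpa [parts] using hpart)
        | succ n =>
          rw [parts_cons_succ] at hpart
          have : parts t n ≤ a := hst.1 _ (parts_mem (by simpa using hlen))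
          omega

lemma mind_le_iff (l : List ℕ) (n : ℕ) :
    mind l ≤ n ↔ ∀ i < l.length, parts l i + i + 1 ≤ n := by
  constructor
  · intro h i hi
    have hne : {k : ℕ | ∀ i < l.length, parts l i + i + 1 ≤ k}.Nonempty := by
      refine ⟨l.sum + l.length + 1, fun i hi => ?_⟩
      have := getD_le_sum l i
      simp only [parts]
      omega
    have hmem := Nat.sInf_mem hne
    exact le_trans (hmem i hi) h
  · intro h
    exact Nat.sInf_le h

lemma parts_pos {l : List ℕ} (hp : IsPartition l) {i : ℕ} (hi : i < l.length) :
    0 < parts l i := hp.2 _ (parts_mem hi)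

lemma mind_le_iff_conj {l : List ℕ} (hp : IsPartition l) (n : ℕ) :
    mind l ≤ n ↔ ∀ j, conj l j = 0 ∨ conj l j + j + 1 ≤ n := by
  rw [mind_le_iff]
  constructor
  · intro h j
    rcases Nat.eq_zero_or_pos (conj l j) with h0 | hpos
    · exact Or.inl h0
    · right
      have hlt : conj l j - 1 < conj l j := by omega
      rw [lt_conj_iff hp.1] at hlt
      have := h _ hlt.1
      omega
  · intro h i hi
    have hpos := parts_pos hp hi
    have hdual : i < conj l (parts l i - 1) := by
      rw [lt_conj_iff hp.1]
      exact ⟨hi, by omega⟩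
    rcases h (parts l i - 1) with h0 | hle
    · omega
    · omega

lemma nu_partition {l : List ℕ} (hp : IsPartition l) (hd : l.headD 0 ≤ l.length + 2) :
    IsPartition (nu l) := by
  constructor
  · apply List.Pairwise.sublist List.filter_sublist
    rw [show (List.Pairwise (fun x1 x2 => x1 ≥ x2) ((l.length + 1) :: List.map (fun x => x - 1) l)) ↔ _ from List.pairwise_cons]
    constructor
    · intro b hb
      rcases List.mem_map.1 hb with ⟨x, hx, rfl⟩
      have := mem_le_head hp.1 hx
      omega
    · exact List.Pairwise.map _ (fun a b hab => Nat.sub_le_sub_right hab 1) hp.1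
  · intro x hx
    have := (List.mem_filter.1 hx).2
    simp at this
    omega

lemma conj_nu (l : List ℕ) (j : ℕ) :
    conj (nu l) j = (if j ≤ l.length then 1 else 0) + conj l (j+1) := by
  rw [conj_countP, nu, List.countP_filter]
  have h1 : (fun a => decide (j < a) && decide (a ≠ 0)) = (fun a => decide (j < a)) := by
    funext a
    by_cases h : j < a
    · have : a ≠ 0 := by omega
      simp [h, this]
    · simp [h]
  rw [h1, List.countP_cons, List.countP_map]
  have h2 : ((fun a => decide (j < a)) ∘ fun x => x - 1) = (fun x => decide (j + 1 < x)) := by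
    funext x
    simp only [Function.comp_apply]
    rcases Nat.lt_or_ge j (x-1) with h | h
    · have : j + 1 < x := by omega
      simp [h, this]
    · have : ¬ (j + 1 < x) := by omega
      have h' : ¬ (j < x - 1) := by omega
      simp [h', this]
  rw [h2, ← conj_countP]
  by_cases hj : j ≤ l.length
  · rw [if_pos hj, if_pos (by simp; omega)]; omega
  · rw [if_neg hj, if_neg (by simp; omega)]; omega

lemma mind_nu_le_iff {l : List ℕ} (hp : IsPartition l) (hd : l.headD 0 ≤ l.length + 2) (n : ℕ) :
    mind (nu l) ≤ n ↔ (l.length + 2 ≤ n ∧ mind l ≤ n) := by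
  rw [mind_le_iff_conj (nu_partition hp hd)]
  constructor
  · intro h
    have hlen : l.length + 2 ≤ n := by
      have := h l.length
      rw [conj_nu, if_pos le_rfl] at this
      omega
    refine ⟨hlen, ?_⟩
    rw [mind_le_iff_conj hp]
    intro j
    cases j with
    | zero =>
      rcases Nat.eq_zero_or_pos (conj l 0) with h0 | hpos
      · exact Or.inl h0
      · right
        have := conj_le_length l 0
        omega
    | succ k =>
      have hk := h k
      rw [conj_nu] at hk
      by_cases hkl : k ≤ l.length
      · rw [if_pos hkl] at hk
        right
        omega
      · left
        exact conj_eq_zero hp.1 (by omega)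
  · rintro ⟨h1, h2⟩
    intro j
    have hc := (mind_le_iff_conj hp n).1 h2 (j+1)
    rw [conj_nu]
    by_cases hjl : j ≤ l.length
    · rw [if_pos hjl]
      rcases hc with h0 | hle
      · right; omega
      · right; omega
    · rw [if_neg hjl]
      rcases hc with h0 | hle
      · left; omega
      · right; omega

lemma mind_nu {l : List ℕ} (hp : IsPartition l) (hd : l.headD 0 ≤ l.length + 2) :
    mind (nu l) = max (l.length + 2) (mind l) := by
  apply le_antisymm
  · exact (mind_nu_le_iff hp hd _).2 ⟨le_max_left _ _, le_max_right _ _⟩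
  · have := (mind_nu_le_iff hp hd (mind (nu l))).1 le_rfl
    exact max_le this.1 this.2

lemma C2_succ (n : ℤ) : C2 (n+1) = C2 n + n := by
  unfold C2
  have h : (n+1) * (n+1-1) = n*(n-1) + n*2 := by ring
  rw [h, Int.add_mul_ediv_right _ _ (by norm_num : (2:ℤ) ≠ 0)]

lemma sInf_base (m h : ℤ) (hm : 0 ≤ m) :
    sInf {n : ℤ | h ≤ n ∧ (0:ℤ) ≤ m + C2 n - C2 h} = h :=
  IsLeast.csInf_eq ⟨⟨le_refl h, by linarith⟩, fun n hn => hn.1⟩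

lemma main_lemma : ∀ (i : ℕ) (g : List ℕ) (m : ℕ), IsPartition g →
    conj g m + m + 1 = mind g →
    (∀ k < m, conj g k + k + 1 ≠ mind g) →
    ∀ δ, nuIter i g = some δ →
      (mind δ : ℤ) = sInf {n : ℤ | (mind g : ℤ) ≤ n ∧ (i:ℤ) ≤ (m:ℤ) + C2 n - C2 (mind g)} := by
  intro i
  induction i with
  | zero =>
    intro g m hp heq hmin δ hδ
    have hgd : g = δ := by simpa [nuIter] using hδ
    subst hgd
    rw [show ((0:ℕ):ℤ) = 0 by simp, sInf_base _ _ (by positivity)]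
  | succ i ih =>
    intro g m hp heq hmin δ hδ
    rw [nuIter] at hδ
    by_cases hd : g.headD 0 ≤ g.length + 2
    swap
    · rw [if_neg hd] at hδ; exact absurd hδ (by simp)
    rw [if_pos hd] at hδ
    have hnp := nu_partition hp hd
    have hc0 : conj g 0 = g.length := conj_zero g hp
    have hminpos : 1 ≤ mind g := by omega
    have hlt : ¬ (mind g ≤ mind g - 1) := by omega
    rw [mind_le_iff_conj hp] at hlt
    push_neg at hlt
    obtain ⟨j, hj0, hj1⟩ := hlt
    have hle := (mind_le_iff_conj hp (mind g)).1 le_rfl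
    have hjeq : conj g j + j + 1 = mind g := by
      rcases hle j with h0 | h
      · omega
      · omega
    have hjm : m ≤ j := by
      by_contra hc
      exact hmin j (by omega) hjeq
    have hcm : 1 ≤ conj g m := by by_contra hc; omega
    have hhead : m < g.headD 0 := conj_pos_lt_head hp.1 (by omega)
    have hmlen : m ≤ g.length + 1 := by omega
    rcases Nat.eq_zero_or_pos m with hm0 | hm1
    · -- bump case
      subst hm0
      have hml : mind g = g.length + 1 := by omega
      have hmindnu : mind (nu g) = g.length + 2 := by
        rw [mind_nu hp hd, Nat.max_eq_left (by omega)]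
      have hconjtop : conj g (g.length + 1) = 0 := by
        rcases hle (g.length + 1) with h0 | h
        · exact h0
        · omega
      have heq' : conj (nu g) g.length + g.length + 1 = mind (nu g) := by
        rw [conj_nu, if_pos le_rfl, hconjtop, hmindnu]
        omega
      have hmin' : ∀ k < g.length, conj (nu g) k + k + 1 ≠ mind (nu g) := by
        intro k hk
        rw [conj_nu, if_pos (by omega), hmindnu]
        rcases hle (k+1) with h0 | h
        · omega
        · omega
      have h2 := ih (nu g) g.length hnp heq' hmin' δ hδ
      rw [h2]
      congr 1
      ext n
      simp only [Set.mem_setOf_eq]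
      have hcast : (mind (nu g) : ℤ) = (mind g : ℤ) + 1 := by
        rw [hmindnu, hml]; push_cast; ring
      have hc2 : C2 (mind (nu g) : ℤ) = C2 (mind g : ℤ) + (mind g : ℤ) := by
        rw [hcast, C2_succ]
      have hlg : (g.length : ℤ) = (mind g : ℤ) - 1 := by rw [hml]; push_cast; ring
      have hipos : (0:ℤ) ≤ (i:ℤ) := Int.natCast_nonneg i
      push_cast
      constructor
      · rintro ⟨ha, hb⟩
        exact ⟨by linarith, by linarith⟩
      · rintro ⟨ha, hb⟩
        have hne : (mind g : ℤ) + 1 ≤ n := by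
          rcases eq_or_lt_of_le ha with hEq | hlt'
          · exfalso; rw [← hEq] at hb; linarith
          · omega
        exact ⟨by linarith, by linarith⟩
    · -- no-bump case
      have hlen1 : 1 ≤ g.length := le_trans hcm (conj_le_length g m)
      have hlen2 : g.length + 2 ≤ mind g := by
        rcases hle 0 with h0 | h
        · omega
        · have := hmin 0 hm1
          omega
      have hmindnu : mind (nu g) = mind g := by
        rw [mind_nu hp hd, Nat.max_eq_right (by omega)]
      have heq' : conj (nu g) (m-1) + (m-1) + 1 = mind (nu g) := by
        rw [conj_nu, if_pos (by omega)]
        have hms : m - 1 + 1 = m := by omega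
        rw [hms, hmindnu]
        omega
      have hmin' : ∀ k < m - 1, conj (nu g) k + k + 1 ≠ mind (nu g) := by
        intro k hk
        rw [conj_nu, if_pos (by omega), hmindnu]
        have := hmin (k+1) (by omega)
        omega
      have h2 := ih (nu g) (m-1) hnp heq' hmin' δ hδ
      rw [hmindnu] at h2
      rw [h2]
      congr 1
      ext n
      simp only [Set.mem_setOf_eq]
      have hmc : ((m-1 : ℕ) : ℤ) = (m:ℤ) - 1 := by
        rw [Nat.cast_sub hm1]; simp
      rw [hmc]
      push_cast
      constructor
      · rintro ⟨ha, hb⟩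
        exact ⟨ha, by linarith⟩
      · rintro ⟨ha, hb⟩
        exact ⟨ha, by linarith⟩

theorem stmt14 (γ : List ℕ) (hγ : IsPartition γ) (m : ℕ)
    -- m is the least integer such that the (m+1)-th column of γ has exactly mind(γ) − m − 1 cells
    (hm : (conj γ m : ℤ) = (mind γ : ℤ) - m - 1)
    (hmleast : ∀ m' < m, (conj γ m' : ℤ) ≠ (mind γ : ℤ) - m' - 1) :
    ∀ (i : ℕ) (δ : List ℕ), nuIter i γ = some δ →
      (mind δ : ℤ) = staircase (dinv γ) m (mind γ) ((dinv γ : ℤ) + i) := by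
  intro i δ hδ
  have heq : conj γ m + m + 1 = mind γ := by omega
  have hminN : ∀ k < m, conj γ k + k + 1 ≠ mind γ := by
    intro k hk
    have := hmleast k hk
    omega
  have h := main_lemma i γ m hγ heq hminN δ hδ
  rw [h, staircase]
  congr 1
  ext n
  simp only [Set.mem_setOf_eq]
  constructor
  · rintro ⟨ha, hb⟩
    exact ⟨ha, by linarith⟩
  · rintro ⟨ha, hb⟩
    exact ⟨ha, by linarith⟩
end
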